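/- arXiv:1307.0332 — 2 statements merged into one kernel-verified Lean document; each statement's English description precedes it below -/
import Mathlib

section
/- Let G = (N, E) be an unweighted graph, let i ≥ 0 be even, and consider the graph G_i. Let S be a coalition in G_i with y_i ∉ S and {y_0, …, y_{i−1}} ⊆ S. Then y_i is pivotal for S in the matching game MG(G_i) if and only if the subgraph of G induced by S ∩ N does not admit a perfect matching. -/
attribute [local instance] Classical.propDecidable

/-- `M` is a matching of the subgraph of the graph with edge set `E` induced by
the vertex set `S`. -/
def IsMatchingOn {V : Type*} (E : Finset (Sym2 V)) (S : Finset V) (M : Finset (Sym2 V)) : Prop :=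
  M ⊆ E ∧ (∀ e ∈ M, ¬ e.IsDiag) ∧ (∀ e ∈ M, ∀ x ∈ e, x ∈ S) ∧
    (∀ e ∈ M, ∀ f ∈ M, e ≠ f → ∀ x ∈ e, x ∉ f)

/-- Value of a coalition `S` in the weighted matching game on the graph with edge set `E` and
weights `w`: the maximum total weight of a matching in the induced subgraph on `S`. -/
noncomputable def matchVal {V : Type*} (E : Finset (Sym2 V)) (w : Sym2 V → ℝ)
    (S : Finset V) : ℝ :=
  sSup {x : ℝ | ∃ M : Finset (Sym2 V), IsMatchingOn E S M ∧ x = ∑ e ∈ M, w e}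

/-- Value of a coalition `S` in the unweighted matching game: the maximum cardinality of a
matching in the induced subgraph on `S`. -/
noncomputable def umatchVal {V : Type*} (E : Finset (Sym2 V)) (S : Finset V) : ℕ :=
  sSup {k : ℕ | ∃ M : Finset (Sym2 V), IsMatchingOn E S M ∧ k = M.card}

/-- The Shapley value of player `i` in the cooperative game with (finite) player set `N` and
characteristic function `v`. -/
noncomputable def shapley {V : Type*} [DecidableEq V] (N : Finset V) (v : Finset V → ℝ)
    (i : V) : ℝ :=
  (1 / (Nat.factorial N.card) : ℝ) *
    ∑ S ∈ (N.erase i).powerset,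
      (Nat.factorial S.card : ℝ) * (Nat.factorial (N.card - S.card - 1) : ℝ) *
        (v (insert i S) - v S)

/-- The raw Shapley value of player `i` in the cooperative game with player set `N` and
characteristic function `v`. -/
noncomputable def rawShapley {V : Type*} [DecidableEq V] (N : Finset V) (v : Finset V → ℝ)
    (i : V) : ℝ :=
  ∑ S ∈ (N.erase i).powerset,
    (Nat.factorial S.card : ℝ) * (Nat.factorial (N.card - S.card - 1) : ℝ) *
      (v (insert i S) - v S)

/-- The subgraph induced by `S` of the graph with edge set `E` admits a perfect matching. -/
def PerfMatchable {V : Type*} (E : Finset (Sym2 V)) (S : Finset V) : Prop :=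
  ∃ M : Finset (Sym2 V), IsMatchingOn E S M ∧ ∀ x ∈ S, ∃ e ∈ M, x ∈ e

/-- Edge set of `G` viewed inside the vertex type `V ⊕ ℕ`, where `Sum.inr j` is the added
vertex `y_j`. -/
noncomputable def leftEdges {V : Type*} (E : Finset (Sym2 V)) : Finset (Sym2 (V ⊕ ℕ)) :=
  E.image (Sym2.map Sum.inl)

/-- Edge set of the graph `G_i`: the edges of `G`, edges from `y_0` to every vertex of `G`, and
the path edges `{y_{j-1}, y_j}` for `j = 1, …, i`. -/
noncomputable def GiEdges {V : Type*} [Fintype V] (E : Finset (Sym2 V)) (i : ℕ) : Finset (Sym2 (V ⊕ ℕ)) :=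
  leftEdges E ∪ Finset.univ.image (fun x : V => s(Sum.inr 0, Sum.inl x)) ∪
    (Finset.Icc 1 i).image (fun j : ℕ => s(Sum.inr (j - 1), Sum.inr j))

/-- Vertex (player) set of the graph `G_i`: the vertices of `G` together with `y_0, …, y_i`. -/
noncomputable def GiPlayers (V : Type*) [Fintype V] (i : ℕ) : Finset (V ⊕ ℕ) :=
  Finset.univ.image Sum.inl ∪ (Finset.range (i + 1)).image Sum.inr

noncomputable def eVerts {W : Type*} [DecidableEq W] (e : Sym2 W) : Finset W :=
  Sym2.lift ⟨fun a b => {a, b}, fun a b => Finset.pair_comm a b⟩ e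

@[simp] lemma eVerts_mk {W : Type*} [DecidableEq W] (a b : W) : eVerts s(a, b) = {a, b} := rfl

lemma mem_eVerts {W : Type*} [DecidableEq W] {e : Sym2 W} {x : W} : x ∈ eVerts e ↔ x ∈ e := by
  induction e using Sym2.inductionOn with
  | hf a b => simp [Sym2.mem_iff]

lemma eVerts_card {W : Type*} [DecidableEq W] {e : Sym2 W} (h : ¬ e.IsDiag) :
    (eVerts e).card = 2 := by
  induction e using Sym2.inductionOn with
  | hf a b => simp only [Sym2.mk_isDiag_iff] at h; simp [Finset.card_pair h]

lemma eVerts_card_le {W : Type*} [DecidableEq W] (e : Sym2 W) : (eVerts e).card ≤ 2 := by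
  induction e using Sym2.inductionOn with
  | hf a b => exact (Finset.card_insert_le _ _).trans (by simp)

lemma two_mul_card_le {W : Type*} [DecidableEq W] (M : Finset (Sym2 W)) (A : Finset W)
    (hnd : ∀ e ∈ M, ¬ e.IsDiag)
    (hdisj : ∀ e ∈ M, ∀ f ∈ M, e ≠ f → ∀ x ∈ e, x ∉ f)
    (hA : ∀ e ∈ M, ∀ x ∈ e, x ∈ A) : 2 * M.card ≤ A.card := by
  have hd : ∀ e ∈ M, ∀ f ∈ M, e ≠ f → Disjoint (eVerts e) (eVerts f) := by
    intro e he f hf hne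
    rw [Finset.disjoint_left]
    intro x hx hx'
    exact hdisj e he f hf hne x (mem_eVerts.1 hx) (mem_eVerts.1 hx')
  have hcard : (M.biUnion eVerts).card = ∑ e ∈ M, (eVerts e).card := Finset.card_biUnion hd
  have hsub : M.biUnion eVerts ⊆ A := by
    intro x hx
    obtain ⟨e, he, hxe⟩ := Finset.mem_biUnion.1 hx
    exact hA e he x (mem_eVerts.1 hxe)
  calc 2 * M.card = ∑ e ∈ M, (eVerts e).card := by
        rw [Finset.sum_congr rfl (fun e he => eVerts_card (hnd e he))]; simp [mul_comm]
    _ = (M.biUnion eVerts).card := hcard.symm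
    _ ≤ A.card := Finset.card_le_card hsub

lemma card_le_two_mul {W : Type*} [DecidableEq W] (M : Finset (Sym2 W)) (A : Finset W)
    (hA : ∀ x ∈ A, ∃ e ∈ M, x ∈ e) : A.card ≤ 2 * M.card := by
  have hsub : A ⊆ M.biUnion eVerts := by
    intro x hx
    obtain ⟨e, he, hxe⟩ := hA x hx
    exact Finset.mem_biUnion.2 ⟨e, he, mem_eVerts.2 hxe⟩
  calc A.card ≤ (M.biUnion eVerts).card := Finset.card_le_card hsub
    _ ≤ ∑ e ∈ M, (eVerts e).card := Finset.card_biUnion_le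
    _ ≤ ∑ _e ∈ M, 2 := Finset.sum_le_sum (fun e _ => eVerts_card_le e)
    _ = 2 * M.card := by simp [mul_comm]

lemma isMatchingOn_empty {V : Type*} (E : Finset (Sym2 V)) (S : Finset V) :
    IsMatchingOn E S (∅ : Finset (Sym2 V)) := by
  refine ⟨Finset.empty_subset _, ?_, ?_, ?_⟩ <;> simp

lemma matchSet_bdd {V : Type*} (E : Finset (Sym2 V)) (S : Finset V) :
    BddAbove {k : ℕ | ∃ M : Finset (Sym2 V), IsMatchingOn E S M ∧ k = M.card} := by
  refine ⟨E.card, ?_⟩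
  rintro k ⟨M, hM, rfl⟩
  exact Finset.card_le_card hM.1

lemma card_le_umatchVal {V : Type*} {E : Finset (Sym2 V)} {S : Finset V} {M : Finset (Sym2 V)}
    (h : IsMatchingOn E S M) : M.card ≤ umatchVal E S :=
  le_csSup (matchSet_bdd E S) ⟨M, h, rfl⟩

lemma umatchVal_le {V : Type*} {E : Finset (Sym2 V)} {S : Finset V} {n : ℕ}
    (h : ∀ M : Finset (Sym2 V), IsMatchingOn E S M → M.card ≤ n) : umatchVal E S ≤ n := by
  have hne : {k : ℕ | ∃ M : Finset (Sym2 V), IsMatchingOn E S M ∧ k = M.card}.Nonempty :=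
    ⟨0, ∅, isMatchingOn_empty E S, by simp⟩
  refine csSup_le hne ?_
  rintro k ⟨M, hM, rfl⟩
  exact h M hM

lemma exists_umatchVal {V : Type*} (E : Finset (Sym2 V)) (S : Finset V) :
    ∃ M : Finset (Sym2 V), IsMatchingOn E S M ∧ umatchVal E S = M.card :=
  Nat.sSup_mem (⟨0, ∅, isMatchingOn_empty E S, by simp⟩ :
    {k : ℕ | ∃ M : Finset (Sym2 V), IsMatchingOn E S M ∧ k = M.card}.Nonempty) (matchSet_bdd E S)

lemma isMatchingOn_mono_set {V : Type*} {E : Finset (Sym2 V)} {S S' : Finset V}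
    {M : Finset (Sym2 V)} (hSS : S ⊆ S') (h : IsMatchingOn E S M) : IsMatchingOn E S' M :=
  ⟨h.1, h.2.1, fun e he x hx => hSS (h.2.2.1 e he x hx), h.2.2.2⟩


lemma leftEdges_isLeft {V : Type*} {E : Finset (Sym2 V)} {e : Sym2 (V ⊕ ℕ)}
    (he : e ∈ leftEdges E) : ∀ x ∈ e, x.isLeft := by
  obtain ⟨e', _, rfl⟩ := Finset.mem_image.1 he
  intro x hx
  obtain ⟨y, _, rfl⟩ := Sym2.mem_map.1 hx
  rfl

lemma leftEdges_nondiag {V : Type*} {E : Finset (Sym2 V)} (hloop : ∀ e ∈ E, ¬ e.IsDiag)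
    {e : Sym2 (V ⊕ ℕ)} (he : e ∈ leftEdges E) : ¬ e.IsDiag := by
  obtain ⟨e', he', rfl⟩ := Finset.mem_image.1 he
  induction e' using Sym2.inductionOn with
  | hf a b =>
    have := hloop _ he'
    simp only [Sym2.mk_isDiag_iff] at this ⊢
    simp only [Sym2.map_pair_eq, Sym2.mk_isDiag_iff]
    exact fun h => this (Sum.inl_injective h)

lemma giEdges_cases {V : Type*} [Fintype V] {E : Finset (Sym2 V)} {i : ℕ} {e : Sym2 (V ⊕ ℕ)}
    (he : e ∈ GiEdges E i) :
    e ∈ leftEdges E ∨ (∃ x : V, e = s(Sum.inr 0, Sum.inl x)) ∨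
      (∃ j : ℕ, 1 ≤ j ∧ j ≤ i ∧ e = s(Sum.inr (j - 1), Sum.inr j)) := by
  simp only [GiEdges, Finset.mem_union, Finset.mem_image, Finset.mem_Icc] at he
  rcases he with (h | ⟨x, _, rfl⟩) | ⟨j, ⟨h1, h2⟩, rfl⟩
  · exact Or.inl h
  · exact Or.inr (Or.inl ⟨x, rfl⟩)
  · exact Or.inr (Or.inr ⟨j, h1, h2, rfl⟩)

lemma left_subset_gi {V : Type*} [Fintype V] (E : Finset (Sym2 V)) (i : ℕ) :
    leftEdges E ⊆ GiEdges E i := fun e he =>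
  Finset.mem_union_left _ (Finset.mem_union_left _ he)

lemma star_mem_gi {V : Type*} [Fintype V] (E : Finset (Sym2 V)) (i : ℕ) (x : V) :
    s(Sum.inr 0, Sum.inl x) ∈ GiEdges E i :=
  Finset.mem_union_left _ (Finset.mem_union_right _
    (Finset.mem_image.2 ⟨x, Finset.mem_univ x, rfl⟩))

lemma path_mem_gi {V : Type*} [Fintype V] (E : Finset (Sym2 V)) {i j : ℕ} (h1 : 1 ≤ j)
    (h2 : j ≤ i) : s(Sum.inr (j - 1), Sum.inr j) ∈ GiEdges E i :=
  Finset.mem_union_right _ (Finset.mem_image.2 ⟨j, Finset.mem_Icc.2 ⟨h1, h2⟩, rfl⟩)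

lemma mem_giPlayers_inr {V : Type*} [Fintype V] {i j : ℕ}
    (h : (Sum.inr j : V ⊕ ℕ) ∈ GiPlayers V i) : j ≤ i := by
  simp only [GiPlayers, Finset.mem_union, Finset.mem_image, Finset.mem_range] at h
  rcases h with ⟨x, _, hx⟩ | ⟨k, hk, hkj⟩
  · exact absurd hx (by simp)
  · obtain rfl := Sum.inr_injective hkj; omega

lemma matching_decomp {V : Type*} [Fintype V] [DecidableEq V] (E : Finset (Sym2 V))
    (hloop : ∀ e ∈ E, ¬ e.IsDiag) (i : ℕ)
    (S' : Finset (V ⊕ ℕ)) (M : Finset (Sym2 (V ⊕ ℕ))) (hM : IsMatchingOn (GiEdges E i) S' M) :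
    ∃ a b c : ℕ, M.card = a + b + c ∧
      (∃ ML, IsMatchingOn (leftEdges E) (S'.filter (fun x => x.isLeft)) ML ∧ ML.card = a) ∧
      b ≤ 1 ∧ 2 * c ≤ (S'.filter (fun x => x.isRight)).card ∧
      (1 ≤ b → ∃ x : V, Sum.inl x ∈ S' ∧ Sum.inr 0 ∈ S' ∧
        (∃ ML, IsMatchingOn (leftEdges E)
          ((S'.filter (fun x => x.isLeft)).erase (Sum.inl x)) ML ∧ ML.card = a) ∧
        2 * c ≤ ((S'.filter (fun x => x.isRight)).erase (Sum.inr 0)).card) := by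
  classical
  obtain ⟨hsub, hnd, hin, hdisj⟩ := hM
  set PL : Sym2 (V ⊕ ℕ) → Prop := fun e => ∀ x ∈ e, x.isLeft with hPL
  set PR : Sym2 (V ⊕ ℕ) → Prop := fun e => ∀ x ∈ e, x.isRight with hPR
  set ML := M.filter PL with hML
  set MP := M.filter PR with hMP
  set MS := M \ (ML ∪ MP) with hMS
  -- ML and MP are disjoint
  have hLP : Disjoint ML MP := by
    rw [Finset.disjoint_left]
    intro e heL heP
    have h1 := (Finset.mem_filter.1 heL).2
    have h2 := (Finset.mem_filter.1 heP).2
    induction e using Sym2.inductionOn with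
    | hf a b =>
      have := h1 a (Sym2.mem_mk_left a b)
      have := h2 a (Sym2.mem_mk_left a b)
      cases a <;> simp_all
  have hcard : M.card = ML.card + MP.card + MS.card := by
    have hsub2 : ML ∪ MP ⊆ M := by
      apply Finset.union_subset <;> exact Finset.filter_subset _ _
    have h1 : MS.card = M.card - (ML ∪ MP).card := by
      rw [hMS]; exact Finset.card_sdiff_of_subset hsub2
    have h2 := Finset.card_le_card hsub2
    have h3 := Finset.card_union_of_disjoint hLP
    omega
  -- every element of MS is a star edge
  have hstar : ∀ e ∈ MS, ∃ x : V, e = s(Sum.inr 0, Sum.inl x) := by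
    intro e he
    rw [hMS, Finset.mem_sdiff, Finset.mem_union, Finset.mem_filter, Finset.mem_filter] at he
    obtain ⟨heM, hnot⟩ := he
    rcases giEdges_cases (hsub heM) with h | ⟨x, rfl⟩ | ⟨j, _, _, rfl⟩
    · exact absurd (Or.inl ⟨heM, leftEdges_isLeft h⟩) hnot
    · exact ⟨x, rfl⟩
    · refine absurd (Or.inr ⟨heM, ?_⟩) hnot
      intro x hx
      rcases Sym2.mem_iff.1 hx with rfl | rfl <;> rfl
  have hMSM : MS ⊆ M := Finset.sdiff_subset
  have hMLM : ML ⊆ M := Finset.filter_subset _ _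
  have hMPM : MP ⊆ M := Finset.filter_subset _ _
  refine ⟨ML.card, MS.card, MP.card, by omega, ?_, ?_, ?_, ?_⟩
  · -- ML is a matching on the left part
    refine ⟨ML, ⟨?_, ?_, ?_, ?_⟩, rfl⟩
    · intro e he
      have heM := hMLM he
      have hl := (Finset.mem_filter.1 he).2
      rcases giEdges_cases (hsub heM) with h | ⟨x, rfl⟩ | ⟨j, _, _, rfl⟩
      · exact h
      · exact absurd (hl _ (Sym2.mem_mk_left _ _)) (by simp)
      · exact absurd (hl _ (Sym2.mem_mk_left _ _)) (by simp)
    · exact fun e he => hnd e (hMLM he)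
    · intro e he x hx
      exact Finset.mem_filter.2 ⟨hin e (hMLM he) x hx, (Finset.mem_filter.1 he).2 x hx⟩
    · exact fun e he f hf => hdisj e (hMLM he) f (hMLM hf)
  · -- MS has at most one element
    rw [Finset.card_le_one]
    intro e he f hf
    obtain ⟨x, rfl⟩ := hstar e he
    obtain ⟨y, rfl⟩ := hstar f hf
    by_contra hne
    exact hdisj _ (hMSM he) _ (hMSM hf) hne (Sum.inr 0) (Sym2.mem_mk_left _ _)
      (Sym2.mem_mk_left _ _)
  · -- double counting for MP
    refine two_mul_card_le MP _ (fun e he => hnd e (hMPM he))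
      (fun e he f hf => hdisj e (hMPM he) f (hMPM hf)) ?_
    intro e he x hx
    exact Finset.mem_filter.2 ⟨hin e (hMPM he) x hx, (Finset.mem_filter.1 he).2 x hx⟩
  · -- refined bounds when MS is nonempty
    intro hb
    obtain ⟨e0, he0⟩ := Finset.card_pos.1 hb
    obtain ⟨x, rfl⟩ := hstar e0 he0
    have he0M := hMSM he0
    have he0nL : s(Sum.inr 0, Sum.inl x) ∉ ML := by
      have := (Finset.mem_sdiff.1 he0).2
      rw [Finset.mem_union] at this
      tauto
    have he0nP : s(Sum.inr 0, Sum.inl x) ∉ MP := by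
      have := (Finset.mem_sdiff.1 he0).2
      rw [Finset.mem_union] at this
      tauto
    refine ⟨x, hin _ he0M _ (Sym2.mem_mk_right _ _), hin _ he0M _ (Sym2.mem_mk_left _ _),
      ⟨ML, ⟨?_, ?_, ?_, ?_⟩, rfl⟩, ?_⟩
    · intro e he
      have heM := hMLM he
      have hl := (Finset.mem_filter.1 he).2
      rcases giEdges_cases (hsub heM) with h | ⟨z, rfl⟩ | ⟨j, _, _, rfl⟩
      · exact h
      · exact absurd (hl _ (Sym2.mem_mk_left _ _)) (by simp)
      · exact absurd (hl _ (Sym2.mem_mk_left _ _)) (by simp)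
    · exact fun e he => hnd e (hMLM he)
    · intro e he z hz
      have hne : e ≠ s(Sum.inr 0, Sum.inl x) := fun h => he0nL (h ▸ he)
      have hnx : Sum.inl x ∉ e := fun h =>
        hdisj _ he0M e (hMLM he) hne.symm _ (Sym2.mem_mk_right _ _) h
      refine Finset.mem_erase.2 ⟨fun h => hnx (h ▸ hz), ?_⟩
      exact Finset.mem_filter.2 ⟨hin e (hMLM he) z hz, (Finset.mem_filter.1 he).2 z hz⟩
    · exact fun e he f hf => hdisj e (hMLM he) f (hMLM hf)
    · refine two_mul_card_le MP _ (fun e he => hnd e (hMPM he))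
        (fun e he f hf => hdisj e (hMPM he) f (hMPM hf)) ?_
      intro e he z hz
      have hne : e ≠ s(Sum.inr 0, Sum.inl x) := fun h => he0nP (h ▸ he)
      have hn0 : (Sum.inr 0 : V ⊕ ℕ) ∉ e := fun h =>
        hdisj _ he0M e (hMPM he) hne.symm _ (Sym2.mem_mk_left _ _) h
      refine Finset.mem_erase.2 ⟨fun h => hn0 (h ▸ hz), ?_⟩
      exact Finset.mem_filter.2 ⟨hin e (hMPM he) z hz, (Finset.mem_filter.1 he).2 z hz⟩

lemma sym2_exists_mem {W : Type*} (e : Sym2 W) : ∃ x, x ∈ e := by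
  induction e using Sym2.inductionOn with
  | hf a b => exact ⟨a, Sym2.mem_mk_left a b⟩

lemma isMatchingOn_mono {V : Type*} {E E' : Finset (Sym2 V)} {S S' : Finset V}
    {M : Finset (Sym2 V)} (hE : E ⊆ E') (hSS : S ⊆ S') (h : IsMatchingOn E S M) :
    IsMatchingOn E' S' M :=
  ⟨h.1.trans hE, h.2.1, fun e he x hx => hSS (h.2.2.1 e he x hx), h.2.2.2⟩

lemma umatchVal_mono {V : Type*} {E : Finset (Sym2 V)} {S S' : Finset V} (hSS : S ⊆ S') :
    umatchVal E S ≤ umatchVal E S' := by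
  obtain ⟨M, hM, hcard⟩ := exists_umatchVal E S
  rw [hcard]
  exact card_le_umatchVal (isMatchingOn_mono (le_refl E) hSS hM)

lemma isMatchingOn_union {V : Type*} [DecidableEq V] {E : Finset (Sym2 V)} {S : Finset V}
    {M1 M2 : Finset (Sym2 V)} (h1 : IsMatchingOn E S M1) (h2 : IsMatchingOn E S M2)
    (hd : ∀ e ∈ M1, ∀ f ∈ M2, ∀ x ∈ e, x ∉ f) :
    IsMatchingOn E S (M1 ∪ M2) ∧ (M1 ∪ M2).card = M1.card + M2.card := by
  classical
  have hdisj : Disjoint M1 M2 := by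
    rw [Finset.disjoint_left]
    intro e he1 he2
    obtain ⟨x, hx⟩ := sym2_exists_mem e
    exact hd e he1 e he2 x hx hx
  constructor
  · refine ⟨Finset.union_subset h1.1 h2.1, ?_, ?_, ?_⟩
    · intro e he
      rcases Finset.mem_union.1 he with h | h
      · exact h1.2.1 e h
      · exact h2.2.1 e h
    · intro e he x hx
      rcases Finset.mem_union.1 he with h | h
      · exact h1.2.2.1 e h x hx
      · exact h2.2.2.1 e h x hx
    · intro e he f hf hne x hx hxf
      rcases Finset.mem_union.1 he with he' | he' <;> rcases Finset.mem_union.1 hf with hf' | hf'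
      · exact h1.2.2.2 e he' f hf' hne x hx hxf
      · exact hd e he' f hf' x hx hxf
      · exact hd f hf' e he' x hxf hx
      · exact h2.2.2.2 e he' f hf' hne x hx hxf
  · exact Finset.card_union_of_disjoint hdisj

noncomputable def pathM (V : Type*) (a r : ℕ) : Finset (Sym2 (V ⊕ ℕ)) :=
  (Finset.range r).image (fun k => s(Sum.inr (a + 2*k), Sum.inr (a + 2*k + 1)))

lemma pathM_vert {V : Type*} {a r : ℕ} {e : Sym2 (V ⊕ ℕ)} (he : e ∈ pathM V a r)
    {x : V ⊕ ℕ} (hx : x ∈ e) : ∃ t : ℕ, x = Sum.inr t ∧ a ≤ t ∧ t < a + 2*r := by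
  obtain ⟨k, hk, rfl⟩ := Finset.mem_image.1 he
  rw [Finset.mem_range] at hk
  rcases Sym2.mem_iff.1 hx with rfl | rfl
  · exact ⟨a + 2*k, rfl, by omega, by omega⟩
  · exact ⟨a + 2*k + 1, rfl, by omega, by omega⟩

lemma pathM_card {V : Type*} (a r : ℕ) : (pathM V a r).card = r := by
  rw [pathM, Finset.card_image_of_injOn, Finset.card_range]
  intro k _ k' _ h
  rw [Sym2.eq_iff] at h
  rcases h with ⟨h1, _⟩ | ⟨h1, h2⟩
  · have := Sum.inr_injective h1; omega
  · have := Sum.inr_injective h1; have := Sum.inr_injective h2; omega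

lemma pathM_isMatchingOn {V : Type*} [Fintype V] (E : Finset (Sym2 V))
    {i a r : ℕ} (ha : a + 2*r ≤ i + 1) (S' : Finset (V ⊕ ℕ))
    (hS' : ∀ t : ℕ, a ≤ t → t < a + 2*r → Sum.inr t ∈ S') :
    IsMatchingOn (GiEdges E i) S' (pathM V a r) := by
  refine ⟨?_, ?_, ?_, ?_⟩
  · intro e he
    obtain ⟨k, hk, rfl⟩ := Finset.mem_image.1 he
    rw [Finset.mem_range] at hk
    have h1 : 1 ≤ a + 2*k + 1 := by omega
    have h2 : a + 2*k + 1 ≤ i := by omega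
    have := path_mem_gi E h1 h2
    simpa using this
  · intro e he
    obtain ⟨k, _, rfl⟩ := Finset.mem_image.1 he
    simp only [Sym2.mk_isDiag_iff]
    intro h
    have := Sum.inr_injective h
    omega
  · intro e he x hx
    obtain ⟨t, rfl, ht1, ht2⟩ := pathM_vert he hx
    exact hS' t ht1 ht2
  · intro e he f hf hne x hx hxf
    obtain ⟨k, hk, rfl⟩ := Finset.mem_image.1 he
    obtain ⟨k', hk', rfl⟩ := Finset.mem_image.1 hf
    rcases Sym2.mem_iff.1 hx with rfl | rfl <;> rcases Sym2.mem_iff.1 hxf with h | h <;>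
      [skip; skip; skip; skip] <;>
    · first
      | (have := Sum.inr_injective h
         have hkk : k = k' := by omega
         exact hne (by rw [hkk]))

/-- For even `i`, a coalition `S` of `G_i` containing `y_0, …, y_{i-1}` but not
`y_i` is pivotal for `y_i` iff the subgraph of `G` induced by `S ∩ N` is not perfectly
matchable. -/
theorem pivotal_Gi_even {V : Type*} [Fintype V] [DecidableEq V]
    (E : Finset (Sym2 V)) (hloop : ∀ e ∈ E, ¬ e.IsDiag)
    (i : ℕ) (hi : Even i)
    (S : Finset (V ⊕ ℕ)) (hS : S ⊆ GiPlayers V i)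
    (hyi : Sum.inr i ∉ S) (hys : ∀ j < i, Sum.inr j ∈ S) :
    (umatchVal (GiEdges E i) (insert (Sum.inr i) S) = umatchVal (GiEdges E i) S + 1) ↔
      ¬ PerfMatchable (leftEdges E) (S.filter (fun x => x.isLeft)) := by
  classical
  obtain ⟨r, hr⟩ := hi
  set T := S.filter (fun x => x.isLeft) with hT
  set m := umatchVal (leftEdges E) T with hm
  have hinrS : ∀ j : ℕ, (Sum.inr j : V ⊕ ℕ) ∈ S ↔ j < i := by
    intro j
    constructor
    · intro h
      have hji := mem_giPlayers_inr (hS h)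
      rcases eq_or_lt_of_le hji with rfl | h'
      · exact absurd h hyi
      · exact h'
    · exact fun h => hys j h
  have hfR : S.filter (fun x => x.isRight) = (Finset.range i).image Sum.inr := by
    ext x
    simp only [Finset.mem_filter, Finset.mem_image, Finset.mem_range]
    constructor
    · rintro ⟨hxS, hxR⟩
      cases x with
      | inl v => simp at hxR
      | inr j => exact ⟨j, (hinrS j).1 hxS, rfl⟩
    · rintro ⟨j, hj, rfl⟩
      exact ⟨(hinrS j).2 hj, rfl⟩
  have hfRcard : (S.filter (fun x => x.isRight)).card = i := by
    rw [hfR, Finset.card_image_of_injective _ Sum.inr_injective, Finset.card_range]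
  have hfL' : (insert (Sum.inr i) S).filter (fun x => x.isLeft) = T := by
    rw [Finset.filter_insert, if_neg (by simp), hT]
  have hfR' : (insert (Sum.inr i) S).filter (fun x => x.isRight) =
      insert (Sum.inr i) (S.filter (fun x => x.isRight)) := by
    rw [Finset.filter_insert, if_pos (by simp)]
  have hfR'card : ((insert (Sum.inr i) S).filter (fun x => x.isRight)).card = i + 1 := by
    rw [hfR', Finset.card_insert_of_notMem, hfRcard]
    simp only [Finset.mem_filter]
    exact fun h => hyi h.1
  -- value of the coalition S
  have hA : umatchVal (GiEdges E i) S = m + r := by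
    apply le_antisymm
    · apply umatchVal_le
      intro M hM
      obtain ⟨a, b, c, hsum, ⟨ML, hML, hMLc⟩, hb, hc, href⟩ := matching_decomp E hloop i S M hM
      have ha : a ≤ m := by
        rw [hm, hT]
        exact hMLc ▸ card_le_umatchVal hML
      rcases Nat.eq_zero_or_pos b with rfl | hb1
      · rw [hfRcard] at hc
        omega
      · obtain ⟨x, hxS, h0S, _, hc'⟩ := href hb1
        have h0i : 0 < i := (hinrS 0).1 h0S
        have h0mem : (Sum.inr 0 : V ⊕ ℕ) ∈ S.filter (fun x => x.isRight) :=
          Finset.mem_filter.2 ⟨h0S, rfl⟩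
        have hero : ((S.filter (fun x => x.isRight)).erase (Sum.inr 0)).card = i - 1 := by
          rw [Finset.card_erase_of_mem h0mem, hfRcard]
        rw [hero] at hc'
        omega
    · obtain ⟨Mm, hMm, hMmc⟩ := exists_umatchVal (leftEdges E) T
      have hP := pathM_isMatchingOn E (i := i) (a := 0) (r := r) (by omega) S
        (fun t _ ht2 => hys t (by omega))
      have hMm' : IsMatchingOn (GiEdges E i) S Mm :=
        isMatchingOn_mono (left_subset_gi E i) (Finset.filter_subset _ _) hMm
      have hd : ∀ e ∈ Mm, ∀ f ∈ pathM V 0 r, ∀ x ∈ e, x ∉ f := by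
        intro e he f hf x hx hxf
        obtain ⟨t, rfl, _, _⟩ := pathM_vert hf hxf
        have := (Finset.mem_filter.1 (hMm.2.2.1 e he _ hx)).2
        simp at this
      obtain ⟨hU, hUc⟩ := isMatchingOn_union hMm' hP hd
      have hle := card_le_umatchVal hU
      rw [hUc, pathM_card] at hle
      rw [hm]
      omega
  -- value of the coalition S ∪ {y_i} in the perfectly matchable case
  have hB : PerfMatchable (leftEdges E) T →
      umatchVal (GiEdges E i) (insert (Sum.inr i) S) = m + r := by
    rintro ⟨Mstar, hMstar, hcover⟩
    have hkey : T.card = 2 * Mstar.card := by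
      have h1 := two_mul_card_le Mstar T hMstar.2.1 hMstar.2.2.2 hMstar.2.2.1
      have h2 := card_le_two_mul Mstar T hcover
      omega
    have hms : Mstar.card ≤ m := by
      rw [hm]
      exact card_le_umatchVal hMstar
    apply le_antisymm
    · apply umatchVal_le
      intro M hM
      obtain ⟨a, b, c, hsum, ⟨ML, hML, hMLc⟩, hb, hc, href⟩ :=
        matching_decomp E hloop i _ M hM
      rw [hfL'] at hML
      have ha : a ≤ m := by
        rw [hm]
        exact hMLc ▸ card_le_umatchVal hML
      rcases Nat.eq_zero_or_pos b with rfl | hb1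
      · rw [hfR'card] at hc
        omega
      · obtain ⟨x, hxS', h0S', ⟨ML2, hML2, hML2c⟩, hc'⟩ := href hb1
        rw [hfL'] at hML2
        have hxT : Sum.inl x ∈ T := by
          rcases Finset.mem_insert.1 hxS' with h | h
          · exact absurd h (by simp)
          · rw [hT]
            exact Finset.mem_filter.2 ⟨h, rfl⟩
        have h2a : 2 * a ≤ (T.erase (Sum.inl x)).card := by
          rw [← hML2c]
          exact two_mul_card_le ML2 _ hML2.2.1 hML2.2.2.2 hML2.2.2.1
        rw [Finset.card_erase_of_mem hxT] at h2a
        have hTpos : 1 ≤ T.card := Finset.card_pos.2 ⟨_, hxT⟩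
        have h0mem : (Sum.inr 0 : V ⊕ ℕ) ∈
            (insert (Sum.inr i) S).filter (fun x => x.isRight) :=
          Finset.mem_filter.2 ⟨h0S', rfl⟩
        rw [Finset.card_erase_of_mem h0mem, hfR'card] at hc'
        omega
    · calc m + r = umatchVal (GiEdges E i) S := hA.symm
        _ ≤ _ := umatchVal_mono (Finset.subset_insert _ _)
  -- value of the coalition S ∪ {y_i} in the non-perfectly-matchable case
  have hC : ¬ PerfMatchable (leftEdges E) T →
      umatchVal (GiEdges E i) (insert (Sum.inr i) S) = m + r + 1 := by
    intro hpm
    apply le_antisymm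
    · apply umatchVal_le
      intro M hM
      obtain ⟨a, b, c, hsum, ⟨ML, hML, hMLc⟩, hb, hc, _⟩ :=
        matching_decomp E hloop i _ M hM
      rw [hfL'] at hML
      have ha : a ≤ m := by
        rw [hm]
        exact hMLc ▸ card_le_umatchVal hML
      rw [hfR'card] at hc
      omega
    · obtain ⟨Mm, hMm, hMmc⟩ := exists_umatchVal (leftEdges E) T
      have hexp : ∃ t ∈ T, ∀ e ∈ Mm, t ∉ e := by
        by_contra h
        push_neg at h
        exact hpm ⟨Mm, hMm, fun z hz => h z hz⟩
      obtain ⟨t, htT, htM⟩ := hexp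
      obtain ⟨x, rfl⟩ : ∃ x : V, t = Sum.inl x := by
        have hl := (Finset.mem_filter.1 htT).2
        cases t with
        | inl x => exact ⟨x, rfl⟩
        | inr j => simp at hl
      have hxS' : Sum.inl x ∈ insert (Sum.inr i) S :=
        Finset.mem_insert_of_mem (Finset.mem_filter.1 htT).1
      have h0S' : (Sum.inr 0 : V ⊕ ℕ) ∈ insert (Sum.inr i) S := by
        rcases Nat.eq_zero_or_pos i with rfl | hi0
        · exact Finset.mem_insert_self _ _
        · exact Finset.mem_insert_of_mem (hys 0 hi0)
      have hstar : IsMatchingOn (GiEdges E i) (insert (Sum.inr i) S)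
          {s(Sum.inr 0, Sum.inl x)} := by
        refine ⟨?_, ?_, ?_, ?_⟩
        · intro e he
          rw [Finset.mem_singleton] at he
          subst he
          exact star_mem_gi E i x
        · intro e he
          rw [Finset.mem_singleton] at he
          subst he
          simp
        · intro e he z hz
          rw [Finset.mem_singleton] at he
          subst he
          rcases Sym2.mem_iff.1 hz with rfl | rfl
          · exact h0S'
          · exact hxS'
        · intro e he f hf hne
          rw [Finset.mem_singleton] at he hf
          subst he; subst hf
          exact absurd rfl hne
      have hP := pathM_isMatchingOn E (i := i) (a := 1) (r := r) (by omega)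
        (insert (Sum.inr i) S) ?_
      swap
      · intro u hu1 hu2
        rcases eq_or_lt_of_le (show u ≤ i by omega) with rfl | hu3
        · exact Finset.mem_insert_self _ _
        · exact Finset.mem_insert_of_mem (hys u hu3)
      have hMm' : IsMatchingOn (GiEdges E i) (insert (Sum.inr i) S) Mm := by
        refine isMatchingOn_mono (left_subset_gi E i) ?_ hMm
        intro z hz
        exact Finset.mem_insert_of_mem (Finset.mem_filter.1 hz).1
      have hMmleft : ∀ e ∈ Mm, ∀ z ∈ e, z.isLeft := fun e he z hz =>
        (Finset.mem_filter.1 (hMm.2.2.1 e he z hz)).2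
      have hd1 : ∀ e ∈ Mm, ∀ f ∈ ({s(Sum.inr 0, Sum.inl x)} : Finset (Sym2 (V ⊕ ℕ))),
          ∀ z ∈ e, z ∉ f := by
        intro e he f hf z hz hzf
        rw [Finset.mem_singleton] at hf
        subst hf
        rcases Sym2.mem_iff.1 hzf with rfl | rfl
        · exact absurd (hMmleft e he _ hz) (by simp)
        · exact htM e he hz
      obtain ⟨hU1, hU1c⟩ := isMatchingOn_union hMm' hstar hd1
      have hd2 : ∀ e ∈ Mm ∪ {s(Sum.inr 0, Sum.inl x)}, ∀ f ∈ pathM V 1 r,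
          ∀ z ∈ e, z ∉ f := by
        intro e he f hf z hz hzf
        obtain ⟨u, rfl, hu1, hu2⟩ := pathM_vert hf hzf
        rcases Finset.mem_union.1 he with he' | he'
        · exact absurd (hMmleft e he' _ hz) (by simp)
        · rw [Finset.mem_singleton] at he'
          subst he'
          rcases Sym2.mem_iff.1 hz with h | h
          · have := Sum.inr_injective h
            omega
          · simp at h
      obtain ⟨hU2, hU2c⟩ := isMatchingOn_union hU1 hP hd2
      have hle := card_le_umatchVal hU2
      rw [hU2c, hU1c, pathM_card, Finset.card_singleton] at hle
      rw [hm]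
      omega
  rw [hA]
  constructor
  · intro h hpm
    rw [hB hpm] at h
    omega
  · intro h
    rw [hC h]
end

section
/- Let G = (N, E, w) be a weighted graph with nonnegative edge weights and n = |N| ≥ 2 vertices, let v be the characteristic function of the matching game MG(G), and let i ∈ N be a vertex with at least one incident edge of positive weight. Let σ be a permutation of N chosen uniformly at random, and let X be the random variable X(σ) = n! · (v(p(i, σ) ∪ {i}) − v(p(i, σ))), where p(i, σ) is the set of players preceding i in σ. Then E[X] = κ_i(N, v) and Var[X] ≤ n² · (n − 1)² · κ_i(N, v)². -/
attribute [local instance] Classical.propDecidable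

/-- The set `p(i, σ)` of players occurring before `i` in the permutation `σ`. -/
def before {n : ℕ} (i : Fin n) (σ : Equiv.Perm (Fin n)) : Finset (Fin n) :=
  Finset.univ.filter (fun j => σ.symm j < σ.symm i)

section MV
variable {V : Type*} [DecidableEq V] (E : Finset (Sym2 V)) (w : Sym2 V → ℝ) (S : Finset V)

lemma isMatchingOn_empty_s17 : IsMatchingOn E S ∅ := by
  refine ⟨Finset.empty_subset _, ?_, ?_, ?_⟩ <;> simp

lemma matchSet_finite :
    {x : ℝ | ∃ M : Finset (Sym2 V), IsMatchingOn E S M ∧ x = ∑ e ∈ M, w e}.Finite := by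
  apply Set.Finite.subset ((E.powerset.finite_toSet).image (fun M => ∑ e ∈ M, w e))
  rintro x ⟨M, hM, rfl⟩
  exact ⟨M, by simpa using hM.1, rfl⟩

lemma matchSet_nonempty :
    {x : ℝ | ∃ M : Finset (Sym2 V), IsMatchingOn E S M ∧ x = ∑ e ∈ M, w e}.Nonempty :=
  ⟨0, ∅, isMatchingOn_empty_s17 E S, by simp⟩

lemma le_matchVal {M : Finset (Sym2 V)} (hM : IsMatchingOn E S M) :
    ∑ e ∈ M, w e ≤ matchVal E w S :=
  le_csSup (matchSet_finite E w S).bddAbove ⟨M, hM, rfl⟩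

lemma exists_matchVal :
    ∃ M : Finset (Sym2 V), IsMatchingOn E S M ∧ matchVal E w S = ∑ e ∈ M, w e :=
  (matchSet_nonempty E w S).csSup_mem (matchSet_finite E w S)

lemma matchVal_nonneg : 0 ≤ matchVal E w S := by
  simpa using le_matchVal E w S (isMatchingOn_empty_s17 E S)

lemma matchVal_mono {S T : Finset V} (hST : S ⊆ T) : matchVal E w S ≤ matchVal E w T := by
  obtain ⟨M, hM, hval⟩ := exists_matchVal E w S
  rw [hval]
  apply le_matchVal E w
  exact ⟨hM.1, hM.2.1, fun e he x hx => hST (hM.2.2.1 e he x hx), hM.2.2.2⟩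

lemma matchVal_insert_le (hw : ∀ e ∈ E, 0 ≤ w e) (i : V) (W : ℝ) (hW0 : 0 ≤ W)
    (hW : ∀ e ∈ E, i ∈ e → w e ≤ W) :
    matchVal E w (insert i S) ≤ matchVal E w S + W := by
  obtain ⟨M, hM, hval⟩ := exists_matchVal E w (insert i S)
  rw [hval]
  have hsplit := Finset.sum_filter_add_sum_filter_not M (fun e => i ∈ e) w
  have h1 : ∑ e ∈ M.filter (fun e => ¬ i ∈ e), w e ≤ matchVal E w S := by
    apply le_matchVal
    refine ⟨fun e he => hM.1 (Finset.mem_filter.1 he).1,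
      fun e he => hM.2.1 e (Finset.mem_filter.1 he).1, ?_, ?_⟩
    · intro e he x hx
      obtain ⟨heM, hie⟩ := Finset.mem_filter.1 he
      have := hM.2.2.1 e heM x hx
      rcases Finset.mem_insert.1 this with h | h
      · exact absurd (h ▸ hx) hie
      · exact h
    · intro e he f hf hef
      exact hM.2.2.2 e (Finset.mem_filter.1 he).1 f (Finset.mem_filter.1 hf).1 hef
  have h2 : ∑ e ∈ M.filter (fun e => i ∈ e), w e ≤ W := by
    rcases (M.filter (fun e => i ∈ e)).eq_empty_or_nonempty with h | ⟨e, he⟩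
    · rw [h]; simpa using hW0
    · have heq : M.filter (fun e => i ∈ e) = {e} := by
        apply Finset.eq_singleton_iff_unique_mem.2
        refine ⟨he, fun f hf => ?_⟩
        by_contra hne
        obtain ⟨hfM, hif⟩ := Finset.mem_filter.1 hf
        obtain ⟨heM, hie⟩ := Finset.mem_filter.1 he
        exact hM.2.2.2 f hfM e heM hne i hif hie
      rw [heq, Finset.sum_singleton]
      obtain ⟨heM, hie⟩ := Finset.mem_filter.1 he
      exact hW e (hM.1 heM) hie
  linarith [hsplit, h1, h2]

lemma matchVal_singleton (j : V) (hloop : ∀ e ∈ E, ¬ e.IsDiag) :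
    matchVal E w {j} = 0 := by
  obtain ⟨M, hM, hval⟩ := exists_matchVal E w {j}
  have hMe : M = ∅ := by
    by_contra h
    obtain ⟨e, he⟩ := Finset.nonempty_iff_ne_empty.2 h
    induction e using Sym2.ind with
    | _ a b =>
      have ha := hM.2.2.1 _ he a (by simp)
      have hb := hM.2.2.1 _ he b (by simp)
      simp only [Finset.mem_singleton] at ha hb
      exact hM.2.1 _ he (by simp [ha, hb, Sym2.isDiag_iff_proj_eq])
  have h0 : matchVal E w {j} = 0 := by rw [hval, hMe]; simp
  exact h0
end MV

def blockEquiv {α β : Type*} (p : α → Prop) (q : β → Prop) [DecidablePred p] [DecidablePred q] :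
    {π : α ≃ β // ∀ a, p a ↔ q (π a)} ≃
      (({a // p a} ≃ {b // q b}) × ({a // ¬ p a} ≃ {b // ¬ q b})) where
  toFun π := ⟨π.1.subtypeEquiv π.2, π.1.subtypeEquiv (fun a => not_congr (π.2 a))⟩
  invFun fg := ⟨(Equiv.sumCompl p).symm.trans ((fg.1.sumCongr fg.2).trans (Equiv.sumCompl q)), by
    intro a
    by_cases h : p a
    · simp [Equiv.sumCompl_symm_apply_of_pos h, h, (fg.1 ⟨a, h⟩).2]
    · simp [Equiv.sumCompl_symm_apply_of_neg h, h, (fg.2 ⟨a, h⟩).2]⟩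
  left_inv := by
    rintro ⟨π, hπ⟩
    apply Subtype.ext
    apply Equiv.ext
    intro a
    by_cases h : p a
    · simp [Equiv.sumCompl_symm_apply_of_pos h]
    · simp [Equiv.sumCompl_symm_apply_of_neg h]
  right_inv := by
    rintro ⟨f, g⟩
    refine Prod.ext ?_ ?_
    · apply Equiv.ext; rintro ⟨a, ha⟩
      apply Subtype.ext
      simp [Equiv.sumCompl_symm_apply_of_pos ha]
    · apply Equiv.ext; rintro ⟨a, ha⟩
      apply Subtype.ext
      simp [Equiv.sumCompl_symm_apply_of_neg ha]

lemma card_equiv_subtypes {α β : Type*} [Fintype α] [Fintype β] (p : α → Prop) (q : β → Prop)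
    [DecidablePred p] [DecidablePred q]
    (h1 : Fintype.card {a // p a} = Fintype.card {b // q b})
    (h2 : Fintype.card {a // ¬ p a} = Fintype.card {b // ¬ q b}) :
    Fintype.card {π : α ≃ β // ∀ a, p a ↔ q (π a)}
      = Nat.factorial (Fintype.card {a // p a}) * Nat.factorial (Fintype.card {a // ¬ p a}) := by
  rw [Fintype.card_congr (blockEquiv p q), Fintype.card_prod,
    Fintype.card_equiv (Fintype.equivOfCardEq h1), Fintype.card_equiv (Fintype.equivOfCardEq h2)]

lemma card_equiv_fix {α β : Type*} [Fintype α] [Fintype β] (a : α) (b : β)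
    {instS : Fintype {g : α ≃ β // g a = b}}
    (h : Fintype.card α = Fintype.card β) :
    @Fintype.card {g : α ≃ β // g a = b} instS = Nat.factorial (Fintype.card α - 1) := by
  have key : ∀ g : α ≃ β, (g a = b) ↔ (∀ x, x = a ↔ (fun y => y = b) (g x)) := by
    intro g
    exact ⟨fun hg x => ⟨fun hx => hx ▸ hg, fun hx => g.injective (hx.trans hg.symm)⟩,
      fun H => (H a).1 rfl⟩
  rw [Fintype.card_congr (Equiv.subtypeEquivRight key)]
  rw [card_equiv_subtypes (fun x => x = a) (fun y => y = b)
    (by simp [Fintype.card_subtype_eq])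
    (by simp [Fintype.card_subtype_compl, Fintype.card_subtype_eq, h])]
  simp [Fintype.card_subtype_compl, Fintype.card_subtype_eq]

lemma card_irrel {α : Type*} (I J : Fintype α) : @Fintype.card α I = @Fintype.card α J := by
  congr 1
  exact Subsingleton.elim I J

def prodSubtypeSnd {X Y : Type*} (p : Y → Prop) : {z : X × Y // p z.2} ≃ X × {y // p y} where
  toFun z := (z.1.1, ⟨z.1.2, z.2⟩)
  invFun w := ⟨(w.1, w.2.1), w.2.2⟩
  left_inv _ := rfl
  right_inv _ := rfl

lemma before_eq_iff {n : ℕ} (i : Fin n) (σ : Equiv.Perm (Fin n)) (S : Finset (Fin n)) :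
    before i σ = S ↔ ∀ j, (σ.symm j < σ.symm i ↔ j ∈ S) := by
  simp [before, Finset.ext_iff]

lemma pos_of_Q {n : ℕ} (i : Fin n) (S : Finset (Fin n)) (π : Equiv.Perm (Fin n))
    (hQ : ∀ j, π j < π i ↔ j ∈ S) : ((π i : Fin n) : ℕ) = S.card := by
  have hSeq : S = Finset.univ.filter (fun j => π j < π i) := by
    ext j; simp [hQ j]
  have himg : (Finset.univ.filter (fun j => π j < π i)).image π = Finset.Iio (π i) := by
    ext x
    simp only [Finset.mem_image, Finset.mem_filter, Finset.mem_univ, true_and, Finset.mem_Iio]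
    constructor
    · rintro ⟨j, hj, rfl⟩; exact hj
    · intro hx; exact ⟨π.symm x, by simpa using hx, by simp⟩
  have := congrArg Finset.card himg
  rw [Finset.card_image_of_injective _ π.injective, Fin.card_Iio] at this
  rw [hSeq, this]

set_option maxHeartbeats 2000000 in
lemma fiber_card {n : ℕ} (i : Fin n) (S : Finset (Fin n)) (hS : S ⊆ Finset.univ.erase i)
    (hslt : S.card < n) :
    (Finset.univ.filter (fun σ : Equiv.Perm (Fin n) => before i σ = S)).card
      = Nat.factorial S.card * Nat.factorial (n - 1 - S.card) := by
  have hi : ¬ i ∈ S := fun h => (Finset.mem_erase.1 (hS h)).1 rfl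
  set s := S.card with hs
  set ks : Fin n := ⟨s, hslt⟩ with hks
  have hksnot : ¬ ks < ks := lt_irrefl ks
  -- chain of equivalences
  have e1 : {σ : Equiv.Perm (Fin n) // before i σ = S} ≃
      {π : Equiv.Perm (Fin n) // ∀ j, π j < π i ↔ j ∈ S} :=
    ⟨fun x => ⟨x.1.symm, (before_eq_iff i x.1 S).1 x.2⟩,
     fun x => ⟨x.1.symm, (before_eq_iff i x.1.symm S).2 (by simpa using x.2)⟩,
     fun x => Subtype.ext (Equiv.symm_symm _),
     fun x => Subtype.ext (Equiv.symm_symm _)⟩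
  have e2 : {π : Equiv.Perm (Fin n) // ∀ j, π j < π i ↔ j ∈ S} ≃
      {π : Equiv.Perm (Fin n) // (∀ j, j ∈ S ↔ π j < ks) ∧ π i = ks} := by
    apply Equiv.subtypeEquivRight
    intro π
    constructor
    · intro hQ
      have hpi : π i = ks := Fin.ext (pos_of_Q i S π hQ)
      exact ⟨fun j => hpi ▸ (hQ j).symm, hpi⟩
    · rintro ⟨h1, h2⟩ j
      rw [h2]
      exact (h1 j).symm
  have e3 : {π : Equiv.Perm (Fin n) // (∀ j, j ∈ S ↔ π j < ks) ∧ π i = ks} ≃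
      {x : {π : Equiv.Perm (Fin n) // ∀ j, j ∈ S ↔ π j < ks} // x.1 i = ks} :=
    (Equiv.subtypeSubtypeEquivSubtypeInter _ _).symm
  have e4 : {x : {π : Equiv.Perm (Fin n) // ∀ j, j ∈ S ↔ π j < ks} // x.1 i = ks} ≃
      {z : (({j // j ∈ S} ≃ {x : Fin n // x < ks}) ×
            ({j // ¬ j ∈ S} ≃ {x : Fin n // ¬ x < ks})) //
        z.2 ⟨i, hi⟩ = ⟨ks, hksnot⟩} := by
    apply Equiv.subtypeEquiv (blockEquiv (fun j => j ∈ S) (fun x => x < ks))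
    intro x
    simp [blockEquiv, Subtype.ext_iff]
  have e5 := prodSubtypeSnd (X := {j // j ∈ S} ≃ {x : Fin n // x < ks})
    (fun g : {j // ¬ j ∈ S} ≃ {x : Fin n // ¬ x < ks} => g ⟨i, hi⟩ = ⟨ks, hksnot⟩)
  -- cardinalities
  have hcS : ∀ I : Fintype {j // j ∈ S}, @Fintype.card _ I = s :=
    fun I => (card_irrel I _).trans (Fintype.card_coe S)
  have hcQ : ∀ I : Fintype {x : Fin n // x < ks}, @Fintype.card _ I = s := by
    have base : Fintype.card {x : Fin n // x < ks} = s := by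
      rw [Fintype.card_subtype]
      have : Finset.univ.filter (fun x : Fin n => x < ks) = Finset.Iio ks := by
        ext x; simp
      rw [this, Fin.card_Iio]
    exact fun I => (card_irrel I _).trans base
  have hcNS : ∀ I : Fintype {j // ¬ j ∈ S}, @Fintype.card _ I = n - s := by
    have base : Fintype.card {j // ¬ j ∈ S} = n - s := by
      rw [Fintype.card_subtype_compl, hcS, Fintype.card_fin]
    exact fun I => (card_irrel I _).trans base
  have hcNQ : ∀ I : Fintype {x : Fin n // ¬ x < ks}, @Fintype.card _ I = n - s := by
    have base : Fintype.card {x : Fin n // ¬ x < ks} = n - s := by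
      rw [Fintype.card_subtype_compl, hcQ, Fintype.card_fin]
    exact fun I => (card_irrel I _).trans base
  rw [← Fintype.card_subtype]
  rw [Fintype.card_congr (((e1.trans e2).trans e3).trans (e4.trans e5)), Fintype.card_prod]
  rw [Fintype.card_equiv (Fintype.equivOfCardEq ((hcS _).trans (hcQ _).symm))]
  rw [card_equiv_fix ⟨i, hi⟩ ⟨ks, hksnot⟩ ((hcNS _).trans (hcNQ _).symm), hcS, hcNS]
  have : n - s - 1 = n - 1 - s := by omega
  rw [this]

/-- For a uniformly random permutation `σ`, the random variable
`X(σ) = n! · (marginal contribution of i to σ)` has expectation `κ_i` and variance at most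
`n² (n-1)² κ_i²`. -/
theorem sampling_mean_and_variance (n : ℕ) (hn : 2 ≤ n)
    (E : Finset (Sym2 (Fin n))) (w : Sym2 (Fin n) → ℝ)
    (hloop : ∀ e ∈ E, ¬ e.IsDiag) (hw : ∀ e ∈ E, 0 ≤ w e)
    (i : Fin n) (hinc : ∃ e ∈ E, i ∈ e ∧ 0 < w e)
    (κ : ℝ) (hκ : κ = rawShapley Finset.univ (matchVal E w) i)
    (X : Equiv.Perm (Fin n) → ℝ)
    (hX : ∀ σ, X σ = (Nat.factorial n : ℝ) *
      (matchVal E w (insert i (before i σ)) - matchVal E w (before i σ))) :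
    (∑ σ : Equiv.Perm (Fin n), X σ) / (Nat.factorial n : ℝ) = κ ∧
      (∑ σ : Equiv.Perm (Fin n), (X σ - κ) ^ 2) / (Nat.factorial n : ℝ) ≤
        (n : ℝ) ^ 2 * ((n : ℝ) - 1) ^ 2 * κ ^ 2 := by
  set v : Finset (Fin n) → ℝ := matchVal E w with hv
  -- the maximum weight W of an edge at i
  obtain ⟨e0, he0E, he0i, he0pos⟩ := hinc
  obtain ⟨estar, hestarT, hmax⟩ := Finset.exists_max_image (E.filter (fun e => i ∈ e)) w
    ⟨e0, Finset.mem_filter.2 ⟨he0E, he0i⟩⟩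
  obtain ⟨hestarE, hestari⟩ := Finset.mem_filter.1 hestarT
  set W := w estar with hW
  have hWpos : 0 < W := lt_of_lt_of_le he0pos (hmax e0 (Finset.mem_filter.2 ⟨he0E, he0i⟩))
  have hWbound : ∀ e ∈ E, i ∈ e → w e ≤ W :=
    fun e heE hei => hmax e (Finset.mem_filter.2 ⟨heE, hei⟩)
  -- the other endpoint j of estar
  have hnd : ¬ estar.IsDiag := hloop _ hestarE
  set j := Sym2.Mem.other hestari with hj
  have hji : j ≠ i := Sym2.other_ne hnd hestari
  have hspec : s(i, j) = estar := Sym2.other_spec hestari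
  -- marginal bounds
  have hmarg0 : ∀ S : Finset (Fin n), 0 ≤ v (insert i S) - v S :=
    fun S => sub_nonneg.2 (matchVal_mono E w (Finset.subset_insert i S))
  have hmargW : ∀ S : Finset (Fin n), v (insert i S) - v S ≤ W := by
    intro S
    have := matchVal_insert_le E w S hw i W hWpos.le hWbound
    simp only [hv]
    linarith [this]
  -- κ as a sum with uniform exponents
  have hNcard : (Finset.univ : Finset (Fin n)).card = n := by simp
  have hκsum : κ = ∑ S ∈ ((Finset.univ : Finset (Fin n)).erase i).powerset,
      ((Nat.factorial S.card : ℝ) * (Nat.factorial (n - 1 - S.card) : ℝ)) *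
        (v (insert i S) - v S) := by
    rw [hκ, rawShapley]
    apply Finset.sum_congr rfl
    intro S hS
    rw [hNcard]
    have : n - S.card - 1 = n - 1 - S.card := by omega
    rw [this]
  have hterm0 : ∀ S ∈ ((Finset.univ : Finset (Fin n)).erase i).powerset,
      (0 : ℝ) ≤ ((Nat.factorial S.card : ℝ) * (Nat.factorial (n - 1 - S.card) : ℝ)) *
        (v (insert i S) - v S) := by
    intro S _
    apply mul_nonneg (by positivity) (hmarg0 S)
  -- lower bound on κ
  have hsingle : ({j} : Finset (Fin n)) ∈ ((Finset.univ : Finset (Fin n)).erase i).powerset := by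
    simp [Finset.singleton_subset_iff, hji]
  have hvj : v {j} = 0 := matchVal_singleton E w j hloop
  have hvij : W ≤ v (insert i {j}) := by
    have hM : IsMatchingOn E (insert i {j}) {estar} := by
      refine ⟨Finset.singleton_subset_iff.2 hestarE, ?_, ?_, ?_⟩
      · intro e he; rw [Finset.mem_singleton] at he; subst he; exact hnd
      · intro e he x hx
        rw [Finset.mem_singleton] at he; subst he
        rw [← hspec, Sym2.mem_iff] at hx
        rcases hx with h | h <;> simp [h]
      · intro e he f hf hef
        rw [Finset.mem_singleton] at he hf
        exact absurd (he.trans hf.symm) hef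
    have := le_matchVal E w _ hM
    simpa [hW] using this
  have hκgeW : ((Nat.factorial (n - 2) : ℝ)) * W ≤ κ := by
    have hle := Finset.single_le_sum hterm0 hsingle
    have hcard1 : ({j} : Finset (Fin n)).card = 1 := Finset.card_singleton j
    have h21 : n - 1 - 1 = n - 2 := by omega
    rw [hκsum]
    refine le_trans ?_ hle
    rw [hcard1, h21]
    have : v (insert i {j}) - v {j} ≥ W := by rw [hvj]; linarith [hvij]
    have hf1 : (Nat.factorial 1 : ℝ) = 1 := by norm_num [Nat.factorial]
    rw [hf1, one_mul]
    have hfpos : (0 : ℝ) < (Nat.factorial (n - 2) : ℝ) := by positivity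
    nlinarith [this, hfpos]
  have hκpos : 0 < κ :=
    lt_of_lt_of_le (by positivity) hκgeW
  -- mean
  have hmaps : ∀ σ : Equiv.Perm (Fin n), σ ∈ (Finset.univ : Finset (Equiv.Perm (Fin n))) →
      before i σ ∈ ((Finset.univ : Finset (Fin n)).erase i).powerset := by
    intro σ _
    apply Finset.mem_powerset.2
    intro x hx
    rw [before, Finset.mem_filter] at hx
    refine Finset.mem_erase.2 ⟨?_, Finset.mem_univ x⟩
    rintro rfl
    exact lt_irrefl _ hx.2
  have hΔsum : ∑ σ : Equiv.Perm (Fin n), (v (insert i (before i σ)) - v (before i σ))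
      = ∑ S ∈ ((Finset.univ : Finset (Fin n)).erase i).powerset,
        ((Nat.factorial S.card : ℝ) * (Nat.factorial (n - 1 - S.card) : ℝ)) *
          (v (insert i S) - v S) := by
    rw [← Finset.sum_fiberwise_of_maps_to hmaps
      (fun σ => v (insert i (before i σ)) - v (before i σ))]
    apply Finset.sum_congr rfl
    intro S hS
    have hconst : ∀ σ ∈ Finset.univ.filter (fun σ : Equiv.Perm (Fin n) => before i σ = S),
        v (insert i (before i σ)) - v (before i σ) = v (insert i S) - v S := by
      intro σ hσ
      rw [(Finset.mem_filter.1 hσ).2]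
    rw [Finset.sum_congr rfl hconst, Finset.sum_const, nsmul_eq_mul]
    have hsub : S ⊆ Finset.univ.erase i := Finset.mem_powerset.1 hS
    have hslt : S.card < n := by
      have := Finset.card_le_card hsub
      rw [Finset.card_erase_of_mem (Finset.mem_univ i), hNcard] at this
      omega
    rw [fiber_card i S hsub hslt]
    push_cast
    ring
  have hcardPerm : (Finset.univ : Finset (Equiv.Perm (Fin n))).card = Nat.factorial n := by
    rw [Finset.card_univ, Fintype.card_perm, Fintype.card_fin]
  have hFpos : (0 : ℝ) < (Nat.factorial n : ℝ) := by positivity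
  have hmeanSum : ∑ σ : Equiv.Perm (Fin n), X σ = (Nat.factorial n : ℝ) * κ := by
    calc ∑ σ : Equiv.Perm (Fin n), X σ
        = ∑ σ : Equiv.Perm (Fin n), (Nat.factorial n : ℝ) *
            (v (insert i (before i σ)) - v (before i σ)) := by
          apply Finset.sum_congr rfl; intro σ _; rw [hX σ]
      _ = (Nat.factorial n : ℝ) *
            ∑ σ : Equiv.Perm (Fin n), (v (insert i (before i σ)) - v (before i σ)) := by
          rw [Finset.mul_sum]
      _ = (Nat.factorial n : ℝ) * κ := by rw [hΔsum, ← hκsum]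
  constructor
  · rw [hmeanSum]
    field_simp
  -- variance
  · have hXnonneg : ∀ σ : Equiv.Perm (Fin n), 0 ≤ X σ := by
      intro σ; rw [hX σ]; exact mul_nonneg hFpos.le (hmarg0 _)
    have hXle : ∀ σ : Equiv.Perm (Fin n), X σ ≤ (Nat.factorial n : ℝ) * W := by
      intro σ; rw [hX σ]
      exact mul_le_mul_of_nonneg_left (hmargW _) hFpos.le
    have hsum2 : ∑ σ : Equiv.Perm (Fin n), (X σ)^2
        ≤ ((Nat.factorial n : ℝ) * W) * ∑ σ : Equiv.Perm (Fin n), X σ := by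
      rw [Finset.mul_sum]
      apply Finset.sum_le_sum
      intro σ _
      have h1 := hXnonneg σ
      have h2 := hXle σ
      nlinarith
    have hexpand : ∑ σ : Equiv.Perm (Fin n), (X σ - κ)^2
        = ∑ σ : Equiv.Perm (Fin n), (X σ)^2 - 2*κ*(∑ σ : Equiv.Perm (Fin n), X σ)
          + (Nat.factorial n : ℝ) * κ^2 := by
      have : ∀ σ : Equiv.Perm (Fin n), (X σ - κ)^2 = (X σ)^2 - 2*κ*(X σ) + κ^2 := by
        intro σ; ring
      rw [Finset.sum_congr rfl (fun σ _ => this σ)]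
      rw [Finset.sum_add_distrib, Finset.sum_sub_distrib, Finset.sum_const, hcardPerm,
        nsmul_eq_mul, ← Finset.mul_sum]
    -- factorial identity
    have hfact : (Nat.factorial n : ℝ) = (n : ℝ) * ((n : ℝ) - 1) * (Nat.factorial (n - 2) : ℝ) := by
      obtain ⟨m, rfl⟩ : ∃ m, n = m + 2 := ⟨n - 2, by omega⟩
      have : (m + 2).factorial = (m + 2) * (m + 1) * m.factorial := by
        simp [Nat.factorial]; ring
      rw [this]
      push_cast
      ring
    have hFW : (Nat.factorial n : ℝ) * W ≤ (n : ℝ) * ((n : ℝ) - 1) * κ := by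
      rw [hfact]
      have hn1 : (0 : ℝ) ≤ (n : ℝ) * ((n : ℝ) - 1) := by
        have : (2 : ℝ) ≤ (n : ℝ) := by exact_mod_cast hn
        nlinarith
      calc (n : ℝ) * ((n : ℝ) - 1) * (Nat.factorial (n - 2) : ℝ) * W
          = (n : ℝ) * ((n : ℝ) - 1) * ((Nat.factorial (n - 2) : ℝ) * W) := by ring
        _ ≤ (n : ℝ) * ((n : ℝ) - 1) * κ := by
            exact mul_le_mul_of_nonneg_left hκgeW hn1
    rw [div_le_iff₀ hFpos, hexpand, hmeanSum]
    have hnn : (2 : ℝ) ≤ (n : ℝ) := by exact_mod_cast hn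
    rw [hmeanSum] at hsum2
    have e1 : ∑ σ : Equiv.Perm (Fin n), (X σ)^2
        ≤ ((n:ℝ)*((n:ℝ)-1)*κ) * ((Nat.factorial n : ℝ) * κ) :=
      le_trans hsum2 (mul_le_mul_of_nonneg_right hFW (by positivity))
    have e2 : (0:ℝ) ≤ κ^2 * (Nat.factorial n : ℝ) *
        (((n:ℝ)*((n:ℝ)-1))^2 - ((n:ℝ)*((n:ℝ)-1)) + 1) := by
      apply mul_nonneg (by positivity)
      nlinarith
    nlinarith [e1, e2]
end
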